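/- arXiv:1705.05673 — 4 statements merged into one kernel-verified Lean document; each statement's English description precedes it below -/
import Mathlib

section
/- For any integers $n \geq 2$ and $r \geq 1$ with $n \geq 2r+1$, the $(r+1-i)\times(r+1-i)$ Vandermonde-type determinant $\det\left( \binom{t_l}{k} \right)$, with $t = (n-r, n-r+2, n-r+3, \dots, n+1-i)$ (i.e., $t_1 = n-r$ and $t_l = n-r+l$ for $l \geq 2$) and $0 \leq k \leq r-i$, equals $r+1-i$ in absolute value, for every $0 \leq i \leq r$. -/
open Finset

private lemma prod_fact_eq_sf (m : ℕ) :
    (∏ k : Fin (m + 1), Nat.factorial (k : ℕ)) = Nat.superFactorial m := by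
  induction m with
  | zero => simp
  | succ s ih =>
    rw [Fin.prod_univ_castSucc]
    simp only [Fin.coe_castSucc, Fin.val_last] at *
    rw [ih, Nat.superFactorial]
    ring

private lemma prod_add_two (s : ℕ) :
    (∏ j : Fin s, ((j : ℕ) + 2)) = Nat.factorial (s + 1) := by
  induction s with
  | zero => simp [Nat.factorial]
  | succ t ih =>
    rw [Fin.prod_univ_castSucc]
    simp only [Fin.coe_castSucc, Fin.val_last] at *
    rw [ih, Nat.factorial_succ (t + 1)]
    ring

private lemma sf_pos (s : ℕ) : 0 < Nat.superFactorial s := by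
  induction s with
  | zero => simp [Nat.superFactorial]
  | succ t ih => rw [Nat.superFactorial]; exact Nat.mul_pos (Nat.factorial_pos _) ih

private lemma key_det (m : ℕ) (v : Fin m → ℕ) :
    (Matrix.of fun i j : Fin m => ((Nat.choose (v i) (j : ℕ) : ℕ) : ℚ)).det
      * (∏ k : Fin m, (Nat.factorial (k : ℕ) : ℚ))
      = (Matrix.vandermonde fun i : Fin m => ((v i : ℕ) : ℚ)).det := by
  rw [Matrix.det_eval_matrixOfPolynomials_eq_det_vandermonde (fun i => ((v i : ℕ) : ℚ))
    (fun j => descPochhammer ℚ (j : ℕ)) (fun j => descPochhammer_natDegree ℚ j)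
    (fun j => monic_descPochhammer ℚ j)]
  have h2 : (Matrix.of fun i j : Fin m => (descPochhammer ℚ (j : ℕ)).eval ((v i : ℕ) : ℚ))
      = Matrix.of (fun i j : Fin m => (Nat.factorial (j : ℕ) : ℚ) *
          (Matrix.of fun i j : Fin m => ((Nat.choose (v i) (j : ℕ) : ℕ) : ℚ)) i j) := by
    ext i j
    simp only [Matrix.of_apply]
    rw [descPochhammer_eval_eq_descFactorial, Nat.descFactorial_eq_factorial_mul_choose]
    push_cast
    ring
  rw [h2, Matrix.det_mul_row]
  ring

private lemma main_det (m a : ℕ) (hm : 1 ≤ m) :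
    |(Matrix.of fun k l : Fin m =>
      ((Nat.choose (if (l : ℕ) = 0 then a else a + (l : ℕ) + 1) (k : ℕ) : ℕ) : ℚ)).det|
      = (m : ℚ) := by
  match m, hm with
  | 1, _ =>
    rw [Matrix.det_fin_one]
    norm_num
  | (s + 2), _ =>
    set v : Fin (s + 2) → ℕ := fun l => if (l : ℕ) = 0 then a else a + (l : ℕ) + 1 with hv
    have htr : (Matrix.of fun k l : Fin (s + 2) => ((Nat.choose (v l) (k : ℕ) : ℕ) : ℚ))
        = Matrix.transpose (Matrix.of fun i j : Fin (s + 2) =>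
            ((Nat.choose (v i) (j : ℕ) : ℕ) : ℚ)) := rfl
    have hvand : (Matrix.vandermonde fun i : Fin (s + 2) => ((v i : ℕ) : ℚ)).det
        = (Nat.factorial (s + 2) : ℚ) * (Nat.superFactorial s : ℚ) := by
      rw [Matrix.det_vandermonde, Fin.prod_univ_succ]
      have h1 : (∏ j ∈ Ioi (0 : Fin (s + 2)), (((v j : ℕ) : ℚ) - ((v 0 : ℕ) : ℚ)))
          = (Nat.factorial (s + 2) : ℚ) := by
        rw [Fin.prod_Ioi_zero]
        have : ∀ j : Fin (s + 1), ((v j.succ : ℕ) : ℚ) - ((v 0 : ℕ) : ℚ) = ((j : ℕ) : ℚ) + 2 := by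
          intro j
          simp only [hv, Fin.val_succ, Fin.val_zero, if_pos rfl, Nat.succ_ne_zero, if_neg]
          push_cast
          ring
        rw [Finset.prod_congr rfl (fun j _ => this j)]
        have := prod_add_two (s + 1)
        calc (∏ j : Fin (s + 1), (((j : ℕ) : ℚ) + 2))
            = ((∏ j : Fin (s + 1), ((j : ℕ) + 2) : ℕ) : ℚ) := by push_cast; rfl
          _ = (Nat.factorial (s + 2) : ℚ) := by rw [this]
      have h2 : (∏ i : Fin (s + 1), ∏ j ∈ Ioi i.succ,
            (((v j : ℕ) : ℚ) - ((v i.succ : ℕ) : ℚ))) = (Nat.superFactorial s : ℚ) := by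
        have hterm : ∀ i : Fin (s + 1), ∏ j ∈ Ioi i.succ,
            (((v j : ℕ) : ℚ) - ((v i.succ : ℕ) : ℚ))
            = ∏ j ∈ Ioi i, (((j : Fin (s+1)) : ℚ) - ((i : Fin (s+1)) : ℚ)) := by
          intro i
          rw [Fin.prod_Ioi_succ]
          refine Finset.prod_congr rfl (fun j _ => ?_)
          simp only [hv, Fin.val_succ, Nat.succ_ne_zero, if_neg]
          push_cast
          ring
        rw [Finset.prod_congr rfl (fun i _ => hterm i), ← Matrix.det_vandermonde
          (fun i : Fin (s + 1) => ((i : Fin (s+1)) : ℚ))]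
        exact_mod_cast Matrix.det_vandermonde_id_eq_superFactorial (R := ℚ) s
      rw [h1, h2]
    have hkey := key_det (s + 2) v
    rw [htr, Matrix.det_transpose]
    have hprod : (∏ k : Fin (s + 2), (Nat.factorial (k : ℕ) : ℚ))
        = (Nat.superFactorial (s + 1) : ℚ) := by
      rw [← prod_fact_eq_sf (s + 1)]
      push_cast
      rfl
    rw [hvand, hprod] at hkey
    have hsf : (Nat.superFactorial (s + 1) : ℚ)
        = (Nat.factorial (s + 1) : ℚ) * (Nat.superFactorial s : ℚ) := by
      rw [Nat.superFactorial]; push_cast; ring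
    have hne1 : (Nat.factorial (s + 1) : ℚ) ≠ 0 := by positivity
    have hne2 : (Nat.superFactorial s : ℚ) ≠ 0 := by
      exact_mod_cast (sf_pos s).ne'
    have hdet : (Matrix.of fun i j : Fin (s + 2) =>
        ((Nat.choose (v i) (j : ℕ) : ℕ) : ℚ)).det = ((s : ℚ) + 2) := by
      have hfac : (Nat.factorial (s + 2) : ℚ)
          = ((s : ℚ) + 2) * (Nat.factorial (s + 1) : ℚ) := by
        rw [Nat.factorial_succ (s + 1)]; push_cast; ring
      rw [hsf, hfac] at hkey
      exact mul_right_cancel₀ (mul_ne_zero hne1 hne2) (by linear_combination hkey)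
    rw [hdet]
    rw [abs_of_pos (by positivity)]
    push_cast
    ring

/-- For integers `n ≥ 2`, `r ≥ 1` with `n ≥ 2r+1` and `0 ≤ i ≤ r`,
the `(r+1-i) × (r+1-i)` Vandermonde-type determinant `det (C(t_l, k))`, with
`t = (n-r, n-r+2, n-r+3, …, n+1-i)` (that is, `t_1 = n-r` and `t_l = n-r+l` for
`l ≥ 2`) and `0 ≤ k ≤ r-i`, equals `r+1-i` in absolute value. -/
theorem schubert_multiplicity_det (n r i : ℕ) (hn : 2 ≤ n) (hr : 1 ≤ r)
    (h : 2 * r + 1 ≤ n) (hi : i ≤ r) :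
    |Matrix.det (Matrix.of fun k l : Fin (r + 1 - i) =>
      ((Nat.choose (if (l : ℕ) = 0 then n - r else n - r + (l : ℕ) + 1) (k : ℕ) : ℕ) : ℚ))|
      = ((r + 1 - i : ℕ) : ℚ) := by
  exact main_det (r + 1 - i) (n - r) (by omega)
end

section
/- Let $r \geq 4$ and $n \geq 2r+1$ be integers. Define $a = \lfloor r/2 \rfloor \cdot \lfloor (n+1)/(r+1) \rfloor$ and $b = \lfloor (n-r)/3 \rfloor$. Then $a > b$. -/
/-- For integers `r ≥ 4` and `n ≥ 2r+1`, one has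
`⌊r/2⌋ · ⌊(n+1)/(r+1)⌋ > ⌊(n-r)/3⌋`. -/
theorem improves_AOP_bound (r n : ℕ) (hr : 4 ≤ r) (hn : 2 * r + 1 ≤ n) :
    (n - r) / 3 < (r / 2) * ((n + 1) / (r + 1)) := by
  set q := (n + 1) / (r + 1) with hq
  have hmod := Nat.div_add_mod (n + 1) (r + 1)
  have hlt := Nat.mod_lt (n + 1) (show 0 < r + 1 by omega)
  have h1 : n + 1 < (r + 1) * q + (r + 1) := by rw [← hq] at hmod; linarith
  have hk : r + 1 ≤ 3 * (r / 2) := by omega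
  rw [Nat.div_lt_iff_lt_mul (by norm_num)]
  calc n - r < (r + 1) * q := by
        rw [Nat.sub_lt_iff_lt_add (by omega)]
        linarith
    _ ≤ (3 * (r / 2)) * q := Nat.mul_le_mul_right _ hk
    _ = r / 2 * q * 3 := by ring
end

section
/- For the tangent developable $Y_n \subseteq \mathbb{P}^n$ of the degree-$n$ rational normal curve, parametrized affinely by $\phi(t,u) = (t + u, t^2 + 2tu, \dots, t^n + n t^{n-1} u)$, one has the differential relations: $\partial^m \phi / (\partial t^{m-k} \partial u^k) = 0$ for all $k \geq 2$, and $\frac{\partial^m \phi}{\partial t^m} - \frac{\partial^m \phi}{\partial t^{m-1} \partial u} = u \cdot \frac{\partial^{m+1}\phi}{\partial t^m \partial u}$ for all $1 \leq m \leq n$. Consequently, for general $p \in Y_n$ and $1 \leq m \leq n-1$, the $m$-osculating space satisfies $\dim T^m_p Y_n = \min\{m+1, n\}$. -/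
open MvPolynomial

/-- The affine parametrization `φ(t,u) = (t+u, t²+2tu, …, tⁿ + n tⁿ⁻¹ u)` of the
tangent developable of the degree-`n` rational normal curve: coordinate `j`
(for `j = 0,…,n-1`, representing the `(j+1)`-st coordinate) is the polynomial
`t^(j+1) + (j+1) t^j u` in the variables `t = X 0`, `u = X 1`. -/
noncomputable def tanDev (n : ℕ) (j : Fin n) : MvPolynomial (Fin 2) ℚ :=
  X 0 ^ ((j : ℕ) + 1) + C (((j : ℕ) + 1 : ℕ) : ℚ) * X 0 ^ (j : ℕ) * X 1

/-- The mixed partial derivative `∂ᵃ_t ∂ᵇ_u` of the `j`-th coordinate of `φ`. -/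
noncomputable def tanDevDeriv (n : ℕ) (a b : ℕ) (j : Fin n) : MvPolynomial (Fin 2) ℚ :=
  (fun P => pderiv (0 : Fin 2) P)^[a] ((fun P => pderiv (1 : Fin 2) P)^[b] (tanDev n j))

lemma iter_pderiv_pow (a k : ℕ) :
    (fun P => pderiv (0 : Fin 2) P)^[a] ((X 0 : MvPolynomial (Fin 2) ℚ) ^ k)
      = C (k.descFactorial a : ℚ) * X 0 ^ (k - a) := by
  induction a generalizing k with
  | zero => simp
  | succ a ih =>
      rw [Function.iterate_succ_apply', ih]
      simp only [pderiv_C_mul, pderiv_pow, pderiv_X_self, mul_one]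
      rw [Nat.descFactorial_succ, Nat.cast_mul, C_mul]
      rw [show ((k - a : ℕ) : MvPolynomial (Fin 2) ℚ) = C ((k - a : ℕ) : ℚ) by simp]
      rw [Nat.sub_sub, Nat.add_comm a 1]; ring

lemma iter_pderiv_add (i : Fin 2) (a : ℕ) (P Q : MvPolynomial (Fin 2) ℚ) :
    (fun P => pderiv i P)^[a] (P + Q)
      = (fun P => pderiv i P)^[a] P + (fun P => pderiv i P)^[a] Q := by
  induction a generalizing P Q with
  | zero => rfl
  | succ a ih => rw [Function.iterate_succ_apply, Function.iterate_succ_apply,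
      Function.iterate_succ_apply]; simp only [map_add, ih]

lemma iter_pderiv_C_mul (i : Fin 2) (a : ℕ) (c : ℚ) (P : MvPolynomial (Fin 2) ℚ) :
    (fun P => pderiv i P)^[a] (C c * P) = C c * (fun P => pderiv i P)^[a] P := by
  induction a generalizing P with
  | zero => rfl
  | succ a ih => rw [Function.iterate_succ_apply, Function.iterate_succ_apply]
                 simp only [pderiv_C_mul, ih]

lemma iter_pderiv_mul_X1 (a : ℕ) (P : MvPolynomial (Fin 2) ℚ) :
    (fun P => pderiv (0 : Fin 2) P)^[a] (P * X 1)
      = ((fun P => pderiv (0 : Fin 2) P)^[a] P) * X 1 := by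
  induction a generalizing P with
  | zero => rfl
  | succ a ih =>
      rw [Function.iterate_succ_apply, Function.iterate_succ_apply]
      have : pderiv (0 : Fin 2) (P * X 1) = pderiv (0 : Fin 2) P * X 1 := by
        rw [pderiv_mul, pderiv_X_of_ne (by decide)]; ring
      rw [this, ih]

lemma tanDevDeriv_b0 (n : ℕ) (a : ℕ) (j : Fin n) :
    tanDevDeriv n a 0 j
      = C (((j : ℕ) + 1).descFactorial a : ℚ) * X 0 ^ ((j : ℕ) + 1 - a)
        + C ((((j : ℕ) + 1) * (j : ℕ).descFactorial a : ℕ) : ℚ)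
            * X 0 ^ ((j : ℕ) - a) * X 1 := by
  unfold tanDevDeriv tanDev
  rw [Function.iterate_zero_apply, iter_pderiv_add, mul_assoc, iter_pderiv_C_mul,
    iter_pderiv_mul_X1, iter_pderiv_pow, iter_pderiv_pow]
  rw [Nat.cast_mul, Nat.cast_add, Nat.cast_one, C_mul, C_add, C_1]
  ring

lemma pderiv1_tanDev (n : ℕ) (j : Fin n) :
    pderiv (1 : Fin 2) (tanDev n j)
      = C (((j : ℕ) + 1 : ℕ) : ℚ) * X 0 ^ (j : ℕ) := by
  unfold tanDev
  rw [map_add, pderiv_pow, pderiv_X_of_ne (by decide), pderiv_mul,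
    pderiv_C_mul, pderiv_pow, pderiv_X_of_ne (by decide), pderiv_X_self]
  ring

lemma tanDevDeriv_b1 (n : ℕ) (a : ℕ) (j : Fin n) :
    tanDevDeriv n a 1 j
      = C ((((j : ℕ) + 1) * (j : ℕ).descFactorial a : ℕ) : ℚ)
          * X 0 ^ ((j : ℕ) - a) := by
  unfold tanDevDeriv
  rw [Function.iterate_one, pderiv1_tanDev, iter_pderiv_C_mul, iter_pderiv_pow,
    Nat.cast_mul, Nat.cast_add, Nat.cast_one, C_mul, C_add, C_1]
  ring

lemma tanDevDeriv_b2 (n : ℕ) (a b : ℕ) (hb : 2 ≤ b) (j : Fin n) :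
    tanDevDeriv n a b j = 0 := by
  obtain ⟨b', rfl⟩ := Nat.exists_eq_add_of_le hb
  unfold tanDevDeriv
  have h2 : (fun P => pderiv (1 : Fin 2) P)^[2] (tanDev n j) = 0 := by
    rw [show ((fun P => pderiv (1 : Fin 2) P)^[2] (tanDev n j))
        = pderiv 1 (pderiv 1 (tanDev n j)) from rfl,
      pderiv1_tanDev, pderiv_C_mul, pderiv_pow, pderiv_X_of_ne (by decide)]
    ring
  rw [Nat.add_comm, Function.iterate_add_apply, h2,
    Function.iterate_fixed (map_zero _) b', Function.iterate_fixed (map_zero _) a]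

lemma tanDevDeriv_part2 (n : ℕ) (j : Fin n) (m : ℕ) (hm : 1 ≤ m) :
    tanDevDeriv n m 0 j - tanDevDeriv n (m - 1) 1 j
      = X 1 * tanDevDeriv n m 1 j := by
  obtain ⟨m', rfl⟩ : ∃ m', m = m' + 1 := ⟨m - 1, (Nat.succ_pred_eq_of_pos hm).symm⟩
  rw [tanDevDeriv_b0, tanDevDeriv_b1, tanDevDeriv_b1, Nat.add_succ_sub_one,
    Nat.succ_sub_succ, Nat.succ_descFactorial_succ]
  ring

lemma tanDev_li (n m : ℕ) (t : ℚ) (hm1 : m + 1 ≤ n)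
    (W : ℕ → Fin n → ℚ)
    (hW : ∀ a (j : Fin n),
      W a j = ((((j : ℕ) + 1) * (j : ℕ).descFactorial a : ℕ) : ℚ) * t ^ ((j : ℕ) - a)) :
    LinearIndependent ℚ (fun i : Fin (m + 1) => W i) := by
  rw [Fintype.linearIndependent_iff]
  intro g hg
  suffices H : ∀ k : ℕ, ∀ hk : k < m + 1, g ⟨k, hk⟩ = 0 by
    intro i; have := H i.val i.isLt; simpa using this
  intro k
  induction k using Nat.strong_induction_on with
  | _ k ih =>
    intro hk
    set jk : Fin n := ⟨k, lt_of_lt_of_le hk hm1⟩ with hjk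
    have h0 : ∑ i : Fin (m + 1), g i * W i jk = 0 := by
      have := congrFun hg jk
      simpa [Finset.sum_apply] using this
    rw [Finset.sum_eq_single (⟨k, hk⟩ : Fin (m + 1))] at h0
    · have hco : ((jk : ℕ) : ℕ) = k := rfl
      rw [hW] at h0
      simp only [hco, Nat.sub_self, pow_zero, mul_one] at h0
      have hne : ((((k : ℕ) + 1) * Nat.descFactorial k k : ℕ) : ℚ) ≠ 0 := by
        rw [Nat.descFactorial_self]
        positivity
      exact (mul_eq_zero.mp h0).resolve_right hne
    · intro b _ hb
      rcases lt_or_gt_of_ne (fun h : (b : ℕ) = k => hb (Fin.ext h)) with hlt | hgt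
      · have := ih b hlt b.isLt
        rw [show (⟨(b : ℕ), b.isLt⟩ : Fin (m + 1)) = b from Fin.ext rfl] at this
        rw [this, zero_mul]
      · rw [hW, show ((jk : ℕ)).descFactorial b = 0 from
          Nat.descFactorial_eq_zero_iff_lt.mpr hgt]
        simp
    · intro h; exact absurd (Finset.mem_univ _) h

/-- For the tangent developable `Y_n ⊆ ℙⁿ` of the degree-`n`
rational normal curve, parametrized by `φ(t,u) = (t+u, t²+2tu, …, tⁿ+ntⁿ⁻¹u)`:
(1) all partial derivatives involving `∂_u` at least twice vanish;
(2) `∂ᵐ_t φ - ∂ᵐ⁻¹_t ∂_u φ = u · ∂ᵐ_t ∂_u φ` for `1 ≤ m ≤ n`;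
(3) consequently, at a general point (here: any `(t,u)` with `u ≠ 0`) and for
`1 ≤ m ≤ n-1`, the span of the partial derivatives of order between `1` and `m`
has dimension `min (m+1) n`, i.e. `dim T^m_p Y_n = min {m+1, n}`. -/
theorem tangent_developable_osculating (n : ℕ) (hn : 1 ≤ n) :
    (∀ (j : Fin n) (a b : ℕ), 2 ≤ b → tanDevDeriv n a b j = 0) ∧
    (∀ (j : Fin n) (m : ℕ), 1 ≤ m → m ≤ n →
      tanDevDeriv n m 0 j - tanDevDeriv n (m - 1) 1 j
        = X 1 * tanDevDeriv n m 1 j) ∧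
    (∀ (m : ℕ) (t u : ℚ), 1 ≤ m → m ≤ n - 1 → u ≠ 0 →
      Module.finrank ℚ ↥(Submodule.span ℚ
        {v : Fin n → ℚ | ∃ a b : ℕ, 1 ≤ a + b ∧ a + b ≤ m ∧
          v = fun j => eval (fun i : Fin 2 => if i = 0 then t else u)
            (tanDevDeriv n a b j)}) = min (m + 1) n) := by
  refine ⟨fun j a b hb => tanDevDeriv_b2 n a b hb j,
    fun j m hm _ => tanDevDeriv_part2 n j m hm, ?_⟩
  intro m t u hm hmn hu
  have hm1 : m + 1 ≤ n := by omega
  set pt : Fin 2 → ℚ := fun i => if i = 0 then t else u with hpt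
  set W : ℕ → Fin n → ℚ := fun a j => eval pt (tanDevDeriv n a 1 j) with hWdef
  set S : Set (Fin n → ℚ) :=
    {v : Fin n → ℚ | ∃ a b : ℕ, 1 ≤ a + b ∧ a + b ≤ m ∧
      v = fun j => eval pt (tanDevDeriv n a b j)} with hS
  have hWval : ∀ a (j : Fin n),
      W a j = ((((j : ℕ) + 1) * (j : ℕ).descFactorial a : ℕ) : ℚ) * t ^ ((j : ℕ) - a) := by
    intro a j
    rw [hWdef]
    simp [tanDevDeriv_b1, hpt]
  have hVW : ∀ a, 1 ≤ a →
      (fun j => eval pt (tanDevDeriv n a 0 j)) = W (a - 1) + u • W a := by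
    intro a ha
    funext j
    have h := congrArg (eval pt) (tanDevDeriv_part2 n j a ha)
    rw [map_sub, map_mul, eval_X] at h
    have hptu : pt 1 = u := by simp [hpt]
    rw [hptu] at h
    simp only [Pi.add_apply, Pi.smul_apply, smul_eq_mul, hWdef]
    linarith
  have hli : LinearIndependent ℚ (fun i : Fin (m + 1) => W i) :=
    tanDev_li n m t hm1 W hWval
  have hspan : Submodule.span ℚ S
      = Submodule.span ℚ (Set.range fun i : Fin (m + 1) => W (i : ℕ)) := by
    apply le_antisymm
    · rw [Submodule.span_le]
      rintro v ⟨a, b, h1, h2, rfl⟩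
      have hWmem : ∀ a' : ℕ, a' ≤ m →
          W a' ∈ Submodule.span ℚ (Set.range fun i : Fin (m + 1) => W (i : ℕ)) :=
        fun a' ha' => Submodule.subset_span ⟨⟨a', by omega⟩, rfl⟩
      match b with
      | 0 =>
          rw [show (fun j => eval pt (tanDevDeriv n a 0 j)) = W (a - 1) + u • W a from
            hVW a (by omega)]
          exact Submodule.add_mem _ (hWmem (a - 1) (by omega))
            (Submodule.smul_mem _ u (hWmem a (by omega)))
      | 1 => exact hWmem a (by omega)
      | (b' + 2) =>
          have : (fun j => eval pt (tanDevDeriv n a (b' + 2) j)) = (0 : Fin n → ℚ) := by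
            funext j
            rw [tanDevDeriv_b2 n a (b' + 2) (by omega) j, map_zero]
            rfl
          rw [this]; exact Submodule.zero_mem _
    · rw [Submodule.span_le]
      rintro v ⟨i, rfl⟩
      by_cases hi : (i : ℕ) < m
      · exact Submodule.subset_span ⟨i, 1, by omega, by omega, rfl⟩
      · have him : (i : ℕ) = m := by omega
        have hV : (fun j => eval pt (tanDevDeriv n m 0 j)) ∈ S :=
          ⟨m, 0, by omega, by omega, rfl⟩
        have hWm1 : W (m - 1) ∈ S := ⟨m - 1, 1, by omega, by omega, rfl⟩
        have hkey : W (i : ℕ)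
            = u⁻¹ • ((fun j => eval pt (tanDevDeriv n m 0 j)) - W (m - 1)) := by
          rw [him, hVW m hm]
          funext j
          simp only [Pi.smul_apply, Pi.sub_apply, Pi.add_apply, smul_eq_mul]
          field_simp
          ring
        have : W (i : ℕ) ∈ (Submodule.span ℚ S : Set (Fin n → ℚ)) := by
          rw [hkey]
          exact Submodule.smul_mem _ _ (Submodule.sub_mem _
            (Submodule.subset_span hV) (Submodule.subset_span hWm1))
        exact this
  rw [hspan, finrank_span_eq_card hli, Fintype.card_fin, min_eq_left hm1]
end

section
/- In the Grassmannian $\mathbb{G}(r,n)$ with $n \geq 2r+1$, any two points can be connected by a rational normal curve of degree $r+1$ contained in $\mathbb{G}(r,n)$. Concretely in coordinates: the map $\gamma : \mathbb{P}^1 \to \mathbb{G}(r,n)$, $\gamma([t:s]) = [(se_0 + te_{r+1}) \wedge (se_1 + te_{r+2}) \wedge \dots \wedge (se_r + te_{2r+1})]$, is a morphism whose image under the Plücker embedding is a rational normal curve of degree $r+1$ joining the points $[e_0 \wedge \dots \wedge e_r]$ (at $t=0$) and $[e_{r+1} \wedge \dots \wedge e_{2r+1}]$ (at $s=0$); its Plücker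 coordinates are, up to sign, the monomials $s^{r+1-j} t^j$ for $j = 0, \dots, r+1$, each possibly appearing with multiplicity, spanning a linear space of dimension $r+1$ in which the image is nondegenerate of degree $r+1$. -/
open ExteriorAlgebra

private lemma range_map_eq_ofFn {α : Type*} (m : ℕ) (g : ℕ → α) :
    (List.range m).map g = List.ofFn (fun i : Fin m => g i) := by
  apply List.ext_getElem <;> simp

private lemma wedge_expand {M : Type*} [AddCommGroup M] [Module ℂ M]
    (e f : ℕ → M) (t s : ℂ) (m : ℕ) :
    ((List.range m).map (fun j => ι ℂ (s • e j + t • f j))).prod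
      = ∑ J ∈ (Finset.range m).powerset, (s ^ (m - J.card) * t ^ J.card) •
          ((List.range m).map (fun j => ι ℂ (if j ∈ J then f j else e j))).prod := by
  induction m with
  | zero => simp
  | succ m ih =>
    have hsplit : ∀ (g : ℕ → M),
        ((List.range (m+1)).map (fun j => ι ℂ (g j))).prod
          = ((List.range m).map (fun j => ι ℂ (g j))).prod * ι ℂ (g m) := by
      intro g
      rw [List.range_succ, List.map_append, List.prod_append]
      simp
    have hm : (m : ℕ) ∉ Finset.range m := by simp
    have hinj : ∀ J₁ ∈ (Finset.range m).powerset, ∀ J₂ ∈ (Finset.range m).powerset,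
        insert m J₁ = insert m J₂ → J₁ = J₂ := by
      intro J₁ h1 J₂ h2 h
      have n1 : m ∉ J₁ := fun hh => hm (Finset.mem_powerset.1 h1 hh)
      have n2 : m ∉ J₂ := fun hh => hm (Finset.mem_powerset.1 h2 hh)
      rw [← Finset.erase_insert n1, ← Finset.erase_insert n2, h]
    have hdisj : Disjoint ((Finset.range m).powerset)
        (((Finset.range m).powerset).image (insert m)) := by
      rw [Finset.disjoint_left]
      intro J hJ hJ'
      obtain ⟨K, hK, rfl⟩ := Finset.mem_image.1 hJ'
      exact hm (Finset.mem_powerset.1 hJ (Finset.mem_insert_self m K))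
    rw [hsplit, map_add, map_smul, map_smul, mul_add, mul_smul_comm, mul_smul_comm, ih,
      Finset.sum_mul, Finset.sum_mul, Finset.smul_sum, Finset.smul_sum]
    conv_rhs => rw [Finset.range_add_one, Finset.powerset_insert]
    rw [Finset.sum_union hdisj, Finset.sum_image hinj]
    congr 1
    · refine Finset.sum_congr rfl fun J hJ => ?_
      have hsub : J ⊆ Finset.range m := Finset.mem_powerset.1 hJ
      have hcard : J.card ≤ m := by
        simpa using Finset.card_le_card hsub
      have hmJ : m ∉ J := fun hh => hm (hsub hh)
      rw [hsplit, if_neg hmJ, smul_mul_assoc, smul_smul]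
      congr 1
      rw [Nat.succ_sub hcard, pow_succ]
      ring
    · refine Finset.sum_congr rfl fun J hJ => ?_
      have hsub : J ⊆ Finset.range m := Finset.mem_powerset.1 hJ
      have hcard : J.card ≤ m := by simpa using Finset.card_le_card hsub
      have hmJ : m ∉ J := fun hh => hm (hsub hh)
      have hc : (insert m J).card = J.card + 1 := Finset.card_insert_of_notMem hmJ
      rw [hsplit, if_pos (Finset.mem_insert_self m J), smul_mul_assoc, smul_smul]
      have hQ : ((List.range m).map (fun j => ι ℂ (if j ∈ J then f j else e j))).prod
          = ((List.range m).map (fun j => ι ℂ (if j ∈ insert m J then f j else e j))).prod := by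
        congr 1
        refine List.map_congr_left fun a ha => ?_
        have : a < m := List.mem_range.1 ha
        congr 1
        simp only [Finset.mem_insert]
        have : ¬ a = m := by omega
        simp [this]
      rw [← hQ]
      congr 1
      rw [hc]
      have : m + 1 - (J.card + 1) = m - J.card := by omega
      rw [this, pow_succ]
      ring

private lemma wedges_li (r n : ℕ) (hn : 2 * r + 1 ≤ n)
    (e : ℕ → (Fin (n+1) → ℂ)) (he : ∀ i (h : i < n + 1), e i = Pi.single ⟨i, h⟩ 1)
    (g : Finset ℕ → ℂ)
    (hg : ∑ J ∈ (Finset.range (r+1)).powerset, g J •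
        ((List.range (r+1)).map (fun j => ι ℂ (e (if j ∈ J then j + r + 1 else j)))).prod = 0)
    (J₀ : Finset ℕ) (hJ₀ : J₀ ∈ (Finset.range (r+1)).powerset) : g J₀ = 0 := by
  classical
  set idx : Finset ℕ → ℕ → ℕ := fun J j => if j ∈ J then j + r + 1 else j with hidx
  have hidx_lt : ∀ J, J ∈ (Finset.range (r+1)).powerset → ∀ a : Fin (r+1), idx J a < n + 1 := by
    intro J hJ a
    have ha : (a : ℕ) < r + 1 := a.isLt
    by_cases h : (a : ℕ) ∈ J <;> simp only [hidx, h, if_true, if_false] <;> omega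
  set K : Fin (r+1) → Fin (n+1) := fun b => ⟨idx J₀ b, hidx_lt J₀ hJ₀ b⟩ with hK
  set A : (Fin (n+1) → ℂ) [⋀^Fin (r+1)]→ₗ[ℂ] ℂ :=
    (Matrix.detRowAlternating (n := Fin (r+1)) (R := ℂ)).compLinearMap
      (LinearMap.funLeft ℂ ℂ K) with hA
  set F : ∀ i : ℕ, (Fin (n+1) → ℂ) [⋀^Fin i]→ₗ[ℂ] ℂ := Pi.single (r+1) A with hF
  set φ := liftAlternating (R := ℂ) (M := Fin (n+1) → ℂ) (N := ℂ) F with hφ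
  have hidx_inj : ∀ a b : Fin (r+1), idx J₀ a = idx J₀ b → a = b := by
    intro a b hab
    have ha : (a : ℕ) < r + 1 := a.isLt
    have hb : (b : ℕ) < r + 1 := b.isLt
    by_cases h1 : (a : ℕ) ∈ J₀ <;> by_cases h2 : (b : ℕ) ∈ J₀ <;>
      simp only [hidx, h1, h2, if_true, if_false] at hab <;>
      exact Fin.ext (by omega)
  -- φ applied to a wedge
  have hφw : ∀ J ∈ (Finset.range (r+1)).powerset,
      φ (((List.range (r+1)).map (fun j => ι ℂ (e (if j ∈ J then j + r + 1 else j)))).prod)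
        = Matrix.det (Matrix.of fun a b : Fin (r+1) =>
            (e (idx J a)) (K b)) := by
    intro J hJ
    rw [range_map_eq_ofFn]
    rw [show (List.ofFn fun i : Fin (r+1) => ι ℂ (e (if (i:ℕ) ∈ J then (i:ℕ) + r + 1 else (i:ℕ))))
        = List.ofFn (fun i : Fin (r+1) => ι ℂ ((fun a : Fin (r+1) => e (idx J a)) i)) from rfl]
    rw [← ExteriorAlgebra.ιMulti_apply, hφ, liftAlternating_apply_ιMulti, hF,
      Pi.single_eq_same, hA]
    rfl
  -- the matrix entries
  have hentry : ∀ J ∈ (Finset.range (r+1)).powerset, ∀ a b : Fin (r+1),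
      (e (idx J a)) (K b) = if idx J₀ (b:ℕ) = idx J (a:ℕ) then 1 else 0 := by
    intro J hJ a b
    rw [he (idx J a) (hidx_lt J hJ a)]
    rw [Pi.single_apply]
    congr 1
    simp only [hK, Fin.mk.injEq, eq_iff_iff]
  -- diagonal case
  have hdiag : φ (((List.range (r+1)).map
      (fun j => ι ℂ (e (if j ∈ J₀ then j + r + 1 else j)))).prod) = 1 := by
    rw [hφw J₀ hJ₀]
    have : (Matrix.of fun a b : Fin (r+1) => (e (idx J₀ a)) (K b)) = (1 : Matrix _ _ ℂ) := by
      ext a b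
      rw [Matrix.of_apply, hentry J₀ hJ₀ a b, Matrix.one_apply]
      by_cases hab : a = b
      · subst hab; simp
      · rw [if_neg hab, if_neg (fun h => hab (hidx_inj b a h).symm)]
    rw [this, Matrix.det_one]
  -- off-diagonal case
  have hoff : ∀ J ∈ (Finset.range (r+1)).powerset, J ≠ J₀ →
      φ (((List.range (r+1)).map
        (fun j => ι ℂ (e (if j ∈ J then j + r + 1 else j)))).prod) = 0 := by
    intro J hJ hne
    -- find a witness in the symmetric difference
    have : ∃ j, (j ∈ J ∧ j ∉ J₀) ∨ (j ∉ J ∧ j ∈ J₀) := by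
      by_contra hc
      push_neg at hc
      exact hne (Finset.ext fun j => by
        have := hc j
        tauto)
    obtain ⟨j, hj⟩ := this
    have hjlt : j < r + 1 := by
      rcases hj with ⟨h1, _⟩ | ⟨_, h2⟩
      · exact Finset.mem_range.1 (Finset.mem_powerset.1 hJ h1)
      · exact Finset.mem_range.1 (Finset.mem_powerset.1 hJ₀ h2)
    set a : Fin (r+1) := ⟨j, hjlt⟩ with ha
    rw [hφw J hJ]
    apply Matrix.det_eq_zero_of_row_eq_zero a
    intro b
    rw [Matrix.of_apply, hentry J hJ a b, if_neg]
    have hb : (b : ℕ) < r + 1 := b.isLt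
    rcases hj with ⟨h1, h2⟩ | ⟨h1, h2⟩
    · by_cases hbJ : (b : ℕ) ∈ J₀ <;>
        simp only [hidx, ha, h1, hbJ, if_true, if_false] <;> intro hcon <;>
        first
        | (exact h2 (by rw [show (b:ℕ) = j by omega] at hbJ; exact hbJ))
        | omega
    · by_cases hbJ : (b : ℕ) ∈ J₀ <;>
        simp only [hidx, ha, h1, hbJ, if_true, if_false] <;> intro hcon <;>
        first
        | (exact hbJ (by rw [show (b:ℕ) = j from hcon]; exact h2))
        | omega
  -- apply φ to hg
  have := congrArg φ hg
  rw [map_sum, map_zero] at this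
  simp only [map_smul] at this
  rw [Finset.sum_eq_single J₀ (fun J hJ hne => by rw [hoff J hJ hne, smul_zero])
    (fun h => absurd hJ₀ h)] at this
  rw [hdiag] at this
  simpa using this

/-- In `𝔾(r,n)` with `n ≥ 2r+1`, the curve
`γ([t:s]) = [(se₀ + te_{r+1}) ∧ ⋯ ∧ (se_r + te_{2r+1})]` joins
`[e₀ ∧ ⋯ ∧ e_r]` (at `t = 0`) and `[e_{r+1} ∧ ⋯ ∧ e_{2r+1}]` (at `s = 0`);
expanding the wedge product, its coordinate on the basis vector indexed by a
subset `J ⊆ {0,…,r}` (replacing `e_j` by `e_{j+r+1}` for `j ∈ J`) is the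
monomial `s^{r+1-|J|} t^{|J|}`; all degrees `0,…,r+1` in `t` occur; and the
image spans a linear space of (affine) dimension `r+2` — i.e. the image is a
rational normal curve of degree `r+1` in a `ℙ^{r+1}`. -/
theorem grassmannian_rational_normal_curve (r n : ℕ) (hn : 2 * r + 1 ≤ n) :
    let M : Type := Fin (n + 1) → ℂ
    let e : ℕ → M := fun i => if h : i < n + 1 then Pi.single (⟨i, h⟩ : Fin (n + 1)) 1 else 0
    let γ : ℂ → ℂ → ExteriorAlgebra ℂ M := fun t s =>
      ((List.range (r + 1)).map
        (fun j => ExteriorAlgebra.ι ℂ (s • e j + t • e (j + r + 1)))).prod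
    γ 0 1 = ((List.range (r + 1)).map (fun j => ExteriorAlgebra.ι ℂ (e j))).prod ∧
    γ 1 0 = ((List.range (r + 1)).map (fun j => ExteriorAlgebra.ι ℂ (e (j + r + 1)))).prod ∧
    (∀ t s : ℂ, γ t s = ∑ J ∈ (Finset.range (r + 1)).powerset,
      (s ^ (r + 1 - J.card) * t ^ J.card) •
        ((List.range (r + 1)).map
          (fun j => ExteriorAlgebra.ι ℂ (e (if j ∈ J then j + r + 1 else j)))).prod) ∧
    (∀ j : ℕ, j ≤ r + 1 → ∃ J ∈ (Finset.range (r + 1)).powerset, J.card = j) ∧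
    Module.finrank ℂ ↥(Submodule.span ℂ
      {x : ExteriorAlgebra ℂ M | ∃ t s : ℂ, x = γ t s}) = r + 2 := by
  classical
  intro M e γ
  have he : ∀ i (h : i < n + 1), e i = Pi.single ⟨i, h⟩ 1 := fun i h => dif_pos h
  have hexp : ∀ t s : ℂ, γ t s = ∑ J ∈ (Finset.range (r + 1)).powerset,
      (s ^ (r + 1 - J.card) * t ^ J.card) •
        ((List.range (r + 1)).map
          (fun j => ExteriorAlgebra.ι ℂ (e (if j ∈ J then j + r + 1 else j)))).prod := by
    intro t s
    show ((List.range (r + 1)).map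
        (fun j => ExteriorAlgebra.ι ℂ (s • e j + t • e (j + r + 1)))).prod = _
    rw [wedge_expand e (fun j => e (j + r + 1)) t s (r + 1)]
    simp only [apply_ite e]
  refine ⟨?_, ?_, hexp, ?_, ?_⟩
  · show ((List.range (r + 1)).map
        (fun j => ExteriorAlgebra.ι ℂ ((1:ℂ) • e j + (0:ℂ) • e (j + r + 1)))).prod = _
    simp
  · show ((List.range (r + 1)).map
        (fun j => ExteriorAlgebra.ι ℂ ((0:ℂ) • e j + (1:ℂ) • e (j + r + 1)))).prod = _
    simp
  · intro j hj
    exact ⟨Finset.range j, Finset.mem_powerset.2 (Finset.range_subset_range.2 hj), Finset.card_range j⟩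
  -- Part 5
  set P := (Finset.range (r+1)).powerset with hP
  set w : Finset ℕ → ExteriorAlgebra ℂ M := fun J =>
    ((List.range (r+1)).map
      (fun j => ExteriorAlgebra.ι ℂ (e (if j ∈ J then j + r + 1 else j)))).prod with hw
  set cf : Finset ℕ → Fin (r+2) := fun J => ⟨min J.card (r+1), by omega⟩ with hcf
  have hcf_card : ∀ J ∈ P, (cf J : ℕ) = J.card := by
    intro J hJ
    have : J.card ≤ r + 1 := by
      simpa using Finset.card_le_card (Finset.mem_powerset.1 hJ)
    simp [hcf, min_eq_left this]
  set W : Fin (r+2) → ExteriorAlgebra ℂ M :=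
    fun k => ∑ J ∈ P.filter (fun J => cf J = k), w J with hW
  have hWdef : ∀ k, W k = ∑ J ∈ P.filter (fun J => cf J = k), w J := fun k => rfl
  have hgroup : ∀ c : Fin (r+2) → ℂ,
      ∑ k, c k • W k = ∑ J ∈ P, c (cf J) • w J := by
    intro c
    rw [← Finset.sum_fiberwise P cf (fun J => c (cf J) • w J)]
    refine Finset.sum_congr rfl fun k _ => ?_
    rw [hWdef, Finset.smul_sum]
    refine Finset.sum_congr rfl fun J hJ => ?_
    rw [(Finset.mem_filter.1 hJ).2]
  have hγW : ∀ t s : ℂ, γ t s = ∑ k : Fin (r+2), (s ^ (r + 1 - (k:ℕ)) * t ^ (k:ℕ)) • W k := by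
    intro t s
    rw [hexp t s, hgroup]
    refine Finset.sum_congr rfl fun J hJ => ?_
    rw [hcf_card J hJ]
  have hWli : LinearIndependent ℂ W := by
    rw [Fintype.linearIndependent_iff]
    intro c hc
    have h0 : ∀ J ∈ P, c (cf J) = 0 := by
      intro J hJ
      refine wedges_li r n hn e he (fun J => c (cf J)) ?_ J hJ
      rw [← hgroup]
      exact hc
    intro k
    have hk : (k:ℕ) ≤ r + 1 := by omega
    have hmem : Finset.range (k:ℕ) ∈ P := Finset.mem_powerset.2 (Finset.range_subset_range.2 hk)
    have hres := h0 (Finset.range (k:ℕ)) hmem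
    have hcfk : cf (Finset.range (k:ℕ)) = k := by
      apply Fin.ext
      rw [hcf_card _ hmem, Finset.card_range]
    rwa [hcfk] at hres
  set L := Fintype.linearCombination ℂ W with hL
  set C : Set (Fin (r+2) → ℂ) :=
    {c | ∃ t s : ℂ, c = fun k => s ^ (r + 1 - k.val) * t ^ k.val} with hC
  have hLapp : ∀ t s : ℂ, γ t s = L (fun k => s ^ (r + 1 - (k:ℕ)) * t ^ (k:ℕ)) := by
    intro t s
    rw [hγW t s, hL, Fintype.linearCombination_apply]
  have hSC : {x : ExteriorAlgebra ℂ M | ∃ t s : ℂ, x = γ t s} = ⇑L '' C := by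
    ext x
    constructor
    · rintro ⟨t, s, rfl⟩
      exact ⟨fun k : Fin (r+2) => s ^ (r + 1 - (k:ℕ)) * t ^ (k:ℕ), ⟨t, s, rfl⟩, hLapp t s ▸ rfl⟩
    · rintro ⟨cvec, ⟨t, s, rfl⟩, rfl⟩
      exact ⟨t, s, (hLapp t s).symm⟩
  have hCtop : Submodule.span ℂ C = ⊤ := by
    set v : Fin (r+2) → (Fin (r+2) → ℂ) :=
      fun k => Matrix.vandermonde (fun i : Fin (r+2) => ((i:ℕ):ℂ)) k with hv
    have hvli : LinearIndependent ℂ v := by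
      refine (Matrix.linearIndependent_rows_iff_isUnit
        (A := Matrix.vandermonde (fun i : Fin (r+2) => ((i:ℕ):ℂ)))).2 ?_
      rw [Matrix.isUnit_iff_isUnit_det, Matrix.det_vandermonde, isUnit_iff_ne_zero]
      refine Finset.prod_ne_zero_iff.2 fun i _ => Finset.prod_ne_zero_iff.2 fun j hj => ?_
      have hij : i < j := Finset.mem_Ioi.1 hj
      refine sub_ne_zero.2 fun h => ?_
      exact absurd (Fin.ext (Nat.cast_injective h.symm)) (ne_of_lt hij)
    have hspan_v : Submodule.span ℂ (Set.range v) = ⊤ :=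
      LinearIndependent.span_eq_top_of_card_eq_finrank hvli (by simp)
    have hsub : Set.range v ⊆ C := by
      rintro _ ⟨k, rfl⟩
      exact ⟨((k:ℕ):ℂ), 1, by funext j; simp [hv, Matrix.vandermonde]⟩
    exact top_le_iff.1 (hspan_v ▸ Submodule.span_mono hsub)
  rw [hSC, Submodule.span_image, hCtop, Submodule.map_top, hL, Fintype.range_linearCombination,
    finrank_span_eq_card hWli, Fintype.card_fin]
end
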